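/- Let P, Q, T be finite posets and ξ : P → Q an order homomorphism. Let Γ_{P,T}(ξ) be the set of homomorphisms ζ : P → T such that the partition G(ζ) equals G(ξ). Then the cardinality of Γ_{P,T}(ξ) equals the number of strict order homomorphisms from the poset (G(ξ), ≼) to T. -/

import Mathlib

/-- Zigzag connectivity within a subset `A`. -/
def ZigConn {α : Type*} [PartialOrder α] (A : Set α) (x y : α) : Prop :=
  Relation.ReflTransGen (fun a b => a ∈ A ∧ b ∈ A ∧ (a < b ∨ b < a)) x y

/-- The zigzag-connectivity component of `x` inside the pre-image `ξ⁻¹(ξ(x))`. -/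
def Gxi {P Q : Type*} [PartialOrder P] (ξ : P → Q) (x : P) : Set P :=
  {y | ZigConn (ξ ⁻¹' {ξ x}) x y}

/-- The partition `G(ξ)` of `P`, as a set of subsets. -/
def GPart {P Q : Type*} [PartialOrder P] (ξ : P → Q) : Set (Set P) :=
  {s | ∃ x : P, s = Gxi ξ x}

/-- The relation `≼₀` on `G(ξ)`. -/
def Prec0 {P Q : Type*} [PartialOrder P] (ξ : P → Q) (a b : GPart ξ) : Prop :=
  ∃ a' ∈ a.1, ∃ b' ∈ b.1, a' ≤ b'

/-- The transitive hull of a relation. -/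
def TransHull {X : Type*} (R : X → X → Prop) (x y : X) : Prop :=
  ∀ S : X → X → Prop, Transitive S → (∀ a b, R a b → S a b) → S x y

/-- The relation `≼` on `G(ξ)`: the transitive hull of `≼₀`. -/
def Prec {P Q : Type*} [PartialOrder P] (ξ : P → Q) : GPart ξ → GPart ξ → Prop :=
  TransHull (Prec0 ξ)

section Aux

variable {P Q T : Type*} [PartialOrder P]

lemma zig_symm {A : Set P} {x y : P} (h : ZigConn A x y) : ZigConn A y x := by
  refine (@Relation.ReflTransGen.stdSymm _ _ ⟨?_⟩).symm _ _ h
  rintro a b ⟨ha, hb, hab⟩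
  exact ⟨hb, ha, hab.symm⟩

lemma zig_trans {A : Set P} {x y z : P} (h : ZigConn A x y) (h' : ZigConn A y z) :
    ZigConn A x z := Relation.ReflTransGen.trans h h'

lemma mem_Gxi_self (ξ : P → Q) (x : P) : x ∈ Gxi ξ x := Relation.ReflTransGen.refl

lemma Gxi_fiber {ξ : P → Q} {x y : P} (h : y ∈ Gxi ξ x) : ξ y = ξ x := by
  induction h with
  | refl => rfl
  | tail _ step _ => exact step.2.1

lemma Gxi_eq {ξ : P → Q} {x y : P} (h : y ∈ Gxi ξ x) : Gxi ξ y = Gxi ξ x := by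
  have hf : ξ ⁻¹' {ξ y} = ξ ⁻¹' {ξ x} := by rw [Gxi_fiber h]
  ext z
  constructor
  · intro hz
    exact zig_trans h (hf ▸ hz)
  · intro hz
    show ZigConn (ξ ⁻¹' {ξ y}) y z
    rw [hf]
    exact zig_trans (zig_symm h) hz

/-- The canonical representative of an element of the partition. -/
noncomputable def rep {ξ : P → Q} (a : GPart ξ) : P := a.2.choose

lemma rep_spec {ξ : P → Q} (a : GPart ξ) : a.1 = Gxi ξ (rep a) := a.2.choose_spec

lemma rep_mem {ξ : P → Q} (a : GPart ξ) : rep a ∈ a.1 := by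
  rw [rep_spec a]; exact mem_Gxi_self ξ _

/-- The quotient map. -/
def pi (ξ : P → Q) (x : P) : GPart ξ := ⟨Gxi ξ x, x, rfl⟩

lemma pi_eq {ξ : P → Q} {a : GPart ξ} {y : P} (h : y ∈ a.1) : pi ξ y = a := by
  apply Subtype.ext
  show Gxi ξ y = a.1
  rw [rep_spec a] at h ⊢
  exact Gxi_eq h

lemma prec_of_prec0 {ξ : P → Q} {a b : GPart ξ} (h : Prec0 ξ a b) : Prec ξ a b :=
  fun _ _ hR => hR a b h

/-- ζ is constant on each component of GPart ξ, provided GPart ζ = GPart ξ. -/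
lemma const_on_comp [PartialOrder T] {ξ : P → Q} {ζ : P → T}
    (hG : GPart ζ = GPart ξ) {x y : P} (h : y ∈ Gxi ξ x) : ζ y = ζ x := by
  have hx : Gxi ξ x ∈ GPart ζ := by rw [hG]; exact ⟨x, rfl⟩
  obtain ⟨w, hw⟩ := hx
  have hxw : x ∈ Gxi ζ w := by rw [← hw]; exact mem_Gxi_self ξ x
  have hyw : y ∈ Gxi ζ w := by rw [← hw]; exact h
  rw [Gxi_fiber hxw, Gxi_fiber hyw]

end Aux

section Main

variable {P Q T : Type*} [PartialOrder P] [PartialOrder Q] [PartialOrder T]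

/-- Forward: from ζ with matching partition, get a strict homomorphism. -/
lemma forward_strict {ξ : P → Q} {ζ : P → T} (hm : Monotone ζ) (hG : GPart ζ = GPart ξ) :
    ∀ a b : GPart ξ, Prec ξ a b →
      ζ (rep a) ≤ ζ (rep b) ∧ (a ≠ b → ζ (rep a) < ζ (rep b)) := by
  intro a b hab
  have key : ∀ a b : GPart ξ, Prec ξ a b →
      (ζ (rep a) ≤ ζ (rep b) ∧ (ζ (rep a) = ζ (rep b) → a = b)) := by
    intro a b hab
    refine hab (fun a b => ζ (rep a) ≤ ζ (rep b) ∧ (ζ (rep a) = ζ (rep b) → a = b)) ?_ ?_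
    · rintro a b c ⟨h1, h2⟩ ⟨h3, h4⟩
      refine ⟨h1.trans h3, fun heq => ?_⟩
      have hb : ζ (rep a) = ζ (rep b) := le_antisymm h1 (heq ▸ h3)
      exact (h2 hb).trans (h4 (hb ▸ heq))
    · rintro a b ⟨a', ha', b', hb', hle⟩
      have hca : ζ a' = ζ (rep a) := by
        have : a' ∈ Gxi ξ (rep a) := (rep_spec a) ▸ ha'
        exact const_on_comp hG this
      have hcb : ζ b' = ζ (rep b) := by
        have : b' ∈ Gxi ξ (rep b) := (rep_spec b) ▸ hb'
        exact const_on_comp hG this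
      refine ⟨hca ▸ hcb ▸ hm hle, fun heq => ?_⟩
      -- ζ a' = ζ b', a' ≤ b' ⇒ b' ∈ Gxi ζ a'
      have hζ : ζ b' = ζ a' := by rw [hca, hcb, heq]
      have hzz : b' ∈ Gxi ζ a' := by
        rcases eq_or_lt_of_le hle with heq' | hlt
        · rw [← heq']; exact mem_Gxi_self ζ a'
        · exact Relation.ReflTransGen.single ⟨rfl, hζ, Or.inl hlt⟩
      -- Gxi ζ a' ∈ GPart ξ, containing both a' and b'
      have hmem : Gxi ζ a' ∈ GPart ξ := by rw [← hG]; exact ⟨a', rfl⟩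
      have hπa : pi ξ a' = (⟨Gxi ζ a', hmem⟩ : GPart ξ) := pi_eq (mem_Gxi_self ζ a')
      have hπb : pi ξ b' = (⟨Gxi ζ a', hmem⟩ : GPart ξ) := pi_eq hzz
      have : pi ξ a' = pi ξ b' := by rw [hπa, hπb]
      calc a = pi ξ a' := (pi_eq ha').symm
        _ = pi ξ b' := this
        _ = b := pi_eq hb'
  obtain ⟨h1, h2⟩ := key a b hab
  exact ⟨h1, fun hne => lt_of_le_of_ne h1 (fun he => hne (h2 he))⟩

/-- Backward: the composite σ ∘ π is monotone. -/
lemma backward_mono {ξ : P → Q} {σ : GPart ξ → T}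
    (hσ : ∀ a b : GPart ξ, Prec ξ a b → σ a ≤ σ b ∧ (a ≠ b → σ a < σ b)) :
    Monotone (fun x => σ (pi ξ x)) := by
  intro x y hxy
  rcases eq_or_lt_of_le hxy with rfl | _
  · exact le_rfl
  · exact (hσ _ _ (prec_of_prec0 ⟨x, mem_Gxi_self ξ x, y, mem_Gxi_self ξ y, hxy⟩)).1

/-- Backward: σ ∘ π has the same components as ξ. -/
lemma backward_Gxi {ξ : P → Q} {σ : GPart ξ → T}
    (hσ : ∀ a b : GPart ξ, Prec ξ a b → σ a ≤ σ b ∧ (a ≠ b → σ a < σ b))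
    (x : P) : Gxi (fun z => σ (pi ξ z)) x = Gxi ξ x := by
  set ζ : P → T := fun z => σ (pi ξ z) with hζdef
  have hconst : ∀ {u v : P}, v ∈ Gxi ξ u → ζ v = ζ u := by
    intro u v hv
    show σ (pi ξ v) = σ (pi ξ u)
    rw [show pi ξ v = pi ξ u from by
      apply Subtype.ext; exact Gxi_eq hv]
  ext y
  constructor
  · -- Gxi ζ x ⊆ Gxi ξ x
    intro hy
    induction hy with
    | refl => exact mem_Gxi_self ξ x
    | @tail b c _ step ih =>
      -- ih : b ∈ Gxi ξ x ; step : b,c ∈ ζ⁻¹{ζ x}, b<c ∨ c<b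
      obtain ⟨hb, hc, hbc⟩ := step
      have hζbc : ζ b = ζ c := by
        simp only [Set.mem_preimage, Set.mem_singleton_iff] at hb hc
        rw [hb, hc]
      have hππ : pi ξ b = pi ξ c := by
        rcases hbc with hlt | hlt
        · by_contra hne
          have := (hσ _ _ (prec_of_prec0 ⟨b, mem_Gxi_self ξ b, c, mem_Gxi_self ξ c, le_of_lt hlt⟩)).2 hne
          exact absurd hζbc (ne_of_lt this)
        · by_contra hne
          have := (hσ _ _ (prec_of_prec0 ⟨c, mem_Gxi_self ξ c, b, mem_Gxi_self ξ b, le_of_lt hlt⟩)).2 (Ne.symm hne)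
          exact absurd hζbc.symm (ne_of_lt this)
      have : c ∈ Gxi ξ b := by
        have : Gxi ξ c = Gxi ξ b := congrArg Subtype.val hππ |>.symm
        rw [← this]; exact mem_Gxi_self ξ c
      exact Gxi_eq ih ▸ this
  · -- Gxi ξ x ⊆ Gxi ζ x
    intro hy
    induction hy with
    | refl => exact mem_Gxi_self ζ x
    | @tail b c hb step ih =>
      obtain ⟨hbA, hcA, hbc⟩ := step
      have hbx : b ∈ Gxi ξ x := hb
      have hcx : c ∈ Gxi ξ x := Relation.ReflTransGen.tail hb ⟨hbA, hcA, hbc⟩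
      refine Relation.ReflTransGen.tail ih ⟨?_, ?_, hbc⟩
      · show ζ b = ζ x
        exact hconst hbx
      · show ζ c = ζ x
        exact hconst hcx

end Main

theorem stmt_10 {P Q T : Type} [Fintype P] [PartialOrder P] [Fintype Q] [PartialOrder Q]
    [Fintype T] [PartialOrder T]
    (ξ : P → Q) (hmono : Monotone ξ) :
    Nat.card {ζ : P → T // Monotone ζ ∧ GPart ζ = GPart ξ} =
    Nat.card {σ : GPart ξ → T //
      ∀ a b : GPart ξ, Prec ξ a b → σ a ≤ σ b ∧ (a ≠ b → σ a < σ b)} := by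
  apply Nat.card_congr
  refine
    { toFun := fun ζ => ⟨fun a => ζ.1 (rep a), forward_strict ζ.2.1 ζ.2.2⟩
      invFun := fun σ => ⟨fun x => σ.1 (pi ξ x), backward_mono σ.2, ?_⟩
      left_inv := ?_
      right_inv := ?_ }
  · -- GPart (σ∘π) = GPart ξ
    have h := backward_Gxi σ.2
    ext s
    constructor
    · rintro ⟨x, rfl⟩; exact ⟨x, h x⟩
    · rintro ⟨x, rfl⟩; exact ⟨x, (h x).symm⟩
  · rintro ⟨ζ, hm, hG⟩
    apply Subtype.ext
    funext x
    show ζ (rep (pi ξ x)) = ζ x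
    have : rep (pi ξ x) ∈ Gxi ξ x := by
      have := rep_mem (pi ξ x)
      exact this
    exact const_on_comp hG this
  · rintro ⟨σ, hσ⟩
    apply Subtype.ext
    funext a
    show σ (pi ξ (rep a)) = σ a
    rw [pi_eq (rep_mem a)]
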